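/- Let m ≥ n be positive integers, and let A be an m × n integer matrix such that there exists an n × m integer matrix B with BA = Eₙ (the n × n identity). Then there exists a matrix A' ∈ GL(m, ℤ) whose first n columns coincide with the columns of A. -/

import Mathlib

/-- A left-invertible `m × n` integer matrix (`m ≥ n`) can be
completed to a matrix in `GL(m, ℤ)` whose first `n` columns are the columns of
`A`. -/
theorem complete_to_unimodular (m n : ℕ) (hn : 0 < n) (hm : 0 < m) (hmn : n ≤ m)
    (A : Matrix (Fin m) (Fin n) ℤ) (B : Matrix (Fin n) (Fin m) ℤ)
    (hBA : B * A = 1) :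
    ∃ A' : Matrix (Fin m) (Fin m) ℤ, IsUnit A'.det ∧
      ∀ (i : Fin m) (j : Fin n), A' i (Fin.castLE hmn j) = A i j := by
  set f : (Fin n → ℤ) →ₗ[ℤ] (Fin m → ℤ) := A.mulVecLin with hf
  set g : (Fin m → ℤ) →ₗ[ℤ] (Fin n → ℤ) := B.mulVecLin with hg
  have hgf : ∀ x, g (f x) = x := by
    intro x
    have : g.comp f = LinearMap.id := by
      rw [hf, hg, ← Matrix.mulVecLin_mul, hBA, Matrix.mulVecLin_one]
    simpa using congrArg (fun h => h x) this
  have hfinj : Function.Injective f := fun a b hab => by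
    have := congrArg g hab; simpa [hgf] using this
  set p : Submodule ℤ (Fin m → ℤ) := LinearMap.range f with hp
  set q : Submodule ℤ (Fin m → ℤ) := LinearMap.ker g with hq
  have hcompl : IsCompl p q := by
    constructor
    · rw [disjoint_iff_inf_le]
      rintro x ⟨⟨y, rfl⟩, hxq⟩
      have : g (f y) = 0 := hxq
      rw [hgf] at this
      simp [this]
    · rw [codisjoint_iff_le_sup]
      intro x _
      have hx : x = f (g x) + (x - f (g x)) := by ring
      rw [hx]
      exact Submodule.add_mem_sup ⟨g x, rfl⟩ (by simp [hq, LinearMap.mem_ker, hgf])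
  -- basis of p from the standard basis of ℤ^n
  let bp : Module.Basis (Fin n) ℤ p :=
    (Pi.basisFun ℤ (Fin n)).map (LinearEquiv.ofInjective f hfinj)
  -- basis of q (submodule of free module over a PID)
  let ι := Module.Free.ChooseBasisIndex ℤ q
  let bq : Module.Basis ι ℤ q := Module.Free.chooseBasis ℤ q
  -- basis of ℤ^m
  let b : Module.Basis (Fin n ⊕ ι) ℤ (Fin m → ℤ) :=
    (bp.prod bq).map (Submodule.prodEquivOfIsCompl p q hcompl)
  have hbinl : ∀ j : Fin n, b (Sum.inl j) = f (Pi.single j 1) := by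
    intro j
    simp only [b, Module.Basis.map_apply, Module.Basis.prod_apply]
    simp [Submodule.coe_prodEquivOfIsCompl, bp, Pi.basisFun_apply]
    rfl
  -- cardinality of ι
  have hcard : Fintype.card ι = m - n := by
    have e := b.indexEquiv (Pi.basisFun ℤ (Fin m))
    have := Fintype.card_congr e
    simp [Fintype.card_sum] at this
    omega
  let eι : ι ≃ Fin (m - n) := Fintype.equivFinOfCardEq hcard
  let e : (Fin n ⊕ ι) ≃ Fin m :=
    ((Equiv.sumCongr (Equiv.refl (Fin n)) eι).trans finSumFinEquiv).trans
      (finCongr (by omega))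
  have he : ∀ j : Fin n, e (Sum.inl j) = Fin.castLE hmn j := by
    intro j; ext; simp [e]
  let b' : Module.Basis (Fin m) ℤ (Fin m → ℤ) := b.reindex e
  refine ⟨(Pi.basisFun ℤ (Fin m)).toMatrix b', ?_, ?_⟩
  · exact IsUnit.of_mul_eq_one _ (by
      rw [← Matrix.det_mul, Module.Basis.toMatrix_mul_toMatrix_flip, Matrix.det_one])
  · intro i j
    have hb' : b' (Fin.castLE hmn j) = f (Pi.single j 1) := by
      rw [← he j]
      simp only [b', Module.Basis.reindex_apply, Equiv.symm_apply_apply]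
      exact hbinl j
    rw [Module.Basis.toMatrix_apply, hb']
    simp [f, Matrix.mulVecLin_apply, Matrix.mulVec_single]
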